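/- For γ ∈ [0,1], the collision frequency ν(v) = ∫_{ℝ³×S²} b(cos θ)|v−v_*|^γ μ(v_*) dσ dv_*, where b ∈ L^∞ is nonnegative with l_b = ∫_{S²} b(cos θ) dσ > 0, satisfies two-sided bounds: there exist constants 0 < ν_0 ≤ ν_1 such that ν_0(1+|v|^γ) ≤ ν(v) ≤ ν_1(1+|v|^γ) for all v ∈ ℝ³. -/

import Mathlib

open MeasureTheory
open scoped RealInnerProductSpace

/-- The standard Maxwellian on ℝ³. -/
noncomputable def gauss (v : EuclideanSpace ℝ (Fin 3)) : ℝ :=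
  (2 * Real.pi) ^ (-(3:ℝ)/2) * Real.exp (-‖v‖ ^ 2 / 2)

namespace CollisionAux

abbrev E3 := EuclideanSpace ℝ (Fin 3)

noncomputable def c0 : ℝ := (2 * Real.pi) ^ (-(3:ℝ)/2)

lemma c0_pos : 0 < c0 := Real.rpow_pos_of_pos (by positivity) _

lemma gauss_eq (v : E3) : gauss v = c0 * Real.exp (-‖v‖ ^ 2 / 2) := rfl

lemma gauss_pos (v : E3) : 0 < gauss v :=
  mul_pos c0_pos (Real.exp_pos _)

lemma gauss_cont : Continuous gauss := by
  unfold gauss; fun_prop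

lemma rpow_le_one_add (t γ : ℝ) (ht : 0 ≤ t) (hγ0 : 0 ≤ γ) (hγ1 : γ ≤ 1) :
    t ^ γ ≤ 1 + t := by
  rcases le_total t 1 with h | h
  · have := Real.rpow_le_one ht h hγ0
    linarith
  · have h2 : t ^ γ ≤ t ^ (1:ℝ) := Real.rpow_le_rpow_of_exponent_le h hγ1
    rw [Real.rpow_one] at h2; linarith

lemma rpow_add_le (a b γ : ℝ) (ha : 0 ≤ a) (hb : 0 ≤ b) (hγ0 : 0 ≤ γ) (hγ1 : γ ≤ 1) :
    (a + b) ^ γ ≤ a ^ γ + b ^ γ := by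
  have h := NNReal.rpow_add_le_add_rpow a.toNNReal b.toNNReal hγ0 hγ1
  have h2 := NNReal.coe_le_coe.2 h
  push_cast at h2
  rwa [Real.coe_toNNReal a ha, Real.coe_toNNReal b hb] at h2

lemma t_exp_le (t : ℝ) (ht : 0 ≤ t) : t * Real.exp (-(t ^ 2 / 4)) ≤ 4 := by
  rcases le_total t 1 with h | h
  · have he : Real.exp (-(t ^ 2 / 4)) ≤ 1 := Real.exp_le_one_iff.2 (by nlinarith)
    nlinarith
  · have hx : t ^ 2 / 4 ≤ Real.exp (t ^ 2 / 4) := by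
      have := Real.add_one_le_exp (t ^ 2 / 4); linarith
    have hpos : (0:ℝ) < Real.exp (t ^ 2 / 4) := Real.exp_pos _
    have he : Real.exp (-(t ^ 2 / 4)) = (Real.exp (t ^ 2 / 4))⁻¹ := by
      rw [Real.exp_neg]
    rw [he]
    rw [mul_inv_le_iff₀ hpos]
    nlinarith

lemma exp_quarter_integrable :
    Integrable (fun x : E3 => Real.exp (-(1/4) * ‖x‖ ^ 2)) := by
  have h := (GaussianFourier.integrable_cexp_neg_mul_sq_norm_add (V := E3) (b := (1/4 : ℂ))
    (by norm_num) 0 0).norm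
  refine h.congr (Filter.Eventually.of_forall fun x => ?_)
  simp [Complex.norm_exp]
  norm_cast

lemma integrable_of_le_gauss4 {f : E3 → ℝ} (hf : AEStronglyMeasurable f volume) (C : ℝ)
    (h : ∀ x, |f x| ≤ C * Real.exp (-(1/4) * ‖x‖ ^ 2)) : Integrable f := by
  exact (exp_quarter_integrable.const_mul C).mono' hf
    (Filter.Eventually.of_forall fun x => by simpa [Real.norm_eq_abs] using h x)

lemma gauss_split (v : E3) :
    gauss v = c0 * (Real.exp (-(‖v‖ ^ 2 / 4)) * Real.exp (-(‖v‖ ^ 2 / 4))) := by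
  rw [gauss_eq, ← Real.exp_add]
  ring_nf

lemma pointwise_upper (γ : ℝ) (hγ0 : 0 ≤ γ) (hγ1 : γ ≤ 1) (v vs : E3) :
    ‖v - vs‖ ^ γ * gauss vs ≤ (c0 * (‖v‖ ^ γ + 5)) * Real.exp (-(1/4) * ‖vs‖ ^ 2) := by
  set t := ‖vs‖ with hts
  have ht : 0 ≤ t := norm_nonneg _
  have hvγ : 0 ≤ ‖v‖ ^ γ := Real.rpow_nonneg (norm_nonneg _) _
  have h1 : ‖v - vs‖ ^ γ ≤ ‖v‖ ^ γ + 1 + t := by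
    have ha : ‖v - vs‖ ^ γ ≤ (‖v‖ + t) ^ γ :=
      Real.rpow_le_rpow (norm_nonneg _) (norm_sub_le _ _) hγ0
    have hb := rpow_add_le ‖v‖ t γ (norm_nonneg _) ht hγ0 hγ1
    have hc := rpow_le_one_add t γ ht hγ0 hγ1
    linarith
  have he1 : Real.exp (-(t ^ 2 / 4)) ≤ 1 := Real.exp_le_one_iff.2 (by nlinarith)
  have he0 : 0 < Real.exp (-(t ^ 2 / 4)) := Real.exp_pos _
  have hte := t_exp_le t ht
  have heq : Real.exp (-(1/4) * t ^ 2) = Real.exp (-(t ^ 2 / 4)) := by ring_nf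
  rw [gauss_split, heq]
  have hnn : 0 ≤ ‖v - vs‖ ^ γ := Real.rpow_nonneg (norm_nonneg _) _
  have step : ‖v - vs‖ ^ γ * (c0 * (Real.exp (-(t ^ 2 / 4)) * Real.exp (-(t ^ 2 / 4))))
      ≤ (‖v‖ ^ γ + 1 + t) * (c0 * (Real.exp (-(t ^ 2 / 4)) * Real.exp (-(t ^ 2 / 4)))) := by
    apply mul_le_mul_of_nonneg_right h1
    exact mul_nonneg c0_pos.le (mul_nonneg he0.le he0.le)
  refine step.trans ?_
  have c0p := c0_pos
  have hsum : (‖v‖ ^ γ + 1 + t) * Real.exp (-(t ^ 2 / 4)) ≤ ‖v‖ ^ γ + 5 := by nlinarith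
  nlinarith [mul_le_mul_of_nonneg_right hsum (mul_nonneg c0p.le he0.le)]

lemma integrand_cont (γ : ℝ) (hγ0 : 0 ≤ γ) (v : E3) :
    Continuous fun vs : E3 => ‖v - vs‖ ^ γ * gauss vs :=
  (((continuous_const.sub continuous_id).norm).rpow_const fun _ => Or.inr hγ0).mul gauss_cont

lemma F_integrable (γ : ℝ) (hγ0 : 0 ≤ γ) (hγ1 : γ ≤ 1) (v : E3) :
    Integrable (fun vs : E3 => ‖v - vs‖ ^ γ * gauss vs) := by
  refine integrable_of_le_gauss4 (integrand_cont γ hγ0 v).aestronglyMeasurable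
    (c0 * (‖v‖ ^ γ + 5)) fun x => ?_
  have h0 : 0 ≤ ‖v - x‖ ^ γ * gauss x :=
    mul_nonneg (Real.rpow_nonneg (norm_nonneg _) _) (gauss_pos x).le
  rw [abs_of_nonneg h0]
  exact pointwise_upper γ hγ0 hγ1 v x

lemma gauss_integrable : Integrable gauss := by
  refine integrable_of_le_gauss4 gauss_cont.aestronglyMeasurable c0 fun x => ?_
  rw [abs_of_nonneg (gauss_pos x).le, gauss_split]
  have he1 : Real.exp (-(‖x‖ ^ 2 / 4)) ≤ 1 := Real.exp_le_one_iff.2 (neg_nonpos.2 (by positivity))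
  have he0 : 0 < Real.exp (-(‖x‖ ^ 2 / 4)) := Real.exp_pos _
  have heq : Real.exp (-(1/4) * ‖x‖ ^ 2) = Real.exp (-(‖x‖ ^ 2 / 4)) := by ring_nf
  rw [heq]
  nlinarith [c0_pos, mul_le_mul_of_nonneg_left he1 (mul_nonneg c0_pos.le he0.le)]

lemma norm_gauss_integrable : Integrable (fun x : E3 => ‖x‖ * gauss x) := by
  refine integrable_of_le_gauss4 (continuous_norm.mul gauss_cont).aestronglyMeasurable
    (4 * c0) fun x => ?_
  have h0 : 0 ≤ ‖x‖ * gauss x := mul_nonneg (norm_nonneg _) (gauss_pos x).le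
  rw [abs_of_nonneg h0, gauss_split]
  have he0 : 0 < Real.exp (-(‖x‖ ^ 2 / 4)) := Real.exp_pos _
  have hte := t_exp_le ‖x‖ (norm_nonneg x)
  have heq : Real.exp (-(1/4) * ‖x‖ ^ 2) = Real.exp (-(‖x‖ ^ 2 / 4)) := by ring_nf
  rw [heq]
  nlinarith [c0_pos, mul_le_mul_of_nonneg_right hte he0.le]

end CollisionAux

open CollisionAux in
/-- Two-sided bounds `ν₀(1+|v|^γ) ≤ ν(v) ≤ ν₁(1+|v|^γ)` for the collision frequency
with hard potential `γ ∈ [0,1]` and bounded angular kernel `b` with positive mass `l_b`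
on the sphere (equipped with the two-dimensional Hausdorff measure). -/
theorem collision_frequency_bounds
    (γ : ℝ) (hγ0 : 0 ≤ γ) (hγ1 : γ ≤ 1)
    (b : ℝ → ℝ) (hb_meas : Measurable b) (hb_nonneg : ∀ x, 0 ≤ b x)
    (bBdd : ℝ) (hb_bdd : ∀ x, b x ≤ bBdd)
    (lb : ℝ) (hlb : 0 < lb)
    (hlb_int : ∀ k : EuclideanSpace ℝ (Fin 3), ‖k‖ = 1 →
      (∫ σ in Metric.sphere (0 : EuclideanSpace ℝ (Fin 3)) 1, b ⟪k, σ⟫ ∂μH[2]) = lb)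
    (ν : EuclideanSpace ℝ (Fin 3) → ℝ)
    (hν : ∀ v, ν v =
      ∫ vs, (∫ σ in Metric.sphere (0 : EuclideanSpace ℝ (Fin 3)) 1,
        b ⟪‖v - vs‖⁻¹ • (v - vs), σ⟫ * ‖v - vs‖ ^ γ * gauss vs ∂μH[2])) :
    ∃ ν₀ ν₁ : ℝ, 0 < ν₀ ∧ ν₀ ≤ ν₁ ∧
      ∀ v, ν₀ * (1 + ‖v‖ ^ γ) ≤ ν v ∧ ν v ≤ ν₁ * (1 + ‖v‖ ^ γ) := by
  classical
  set F : E3 → ℝ := fun v => ∫ vs, ‖v - vs‖ ^ γ * gauss vs with hFdef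
  -- key lower bound tool
  have setlower : ∀ (v w : E3) (r : ℝ), 0 < r → ∀ c : ℝ, 0 ≤ c →
      (∀ vs ∈ Metric.closedBall w r, c ≤ ‖v - vs‖ ^ γ * gauss vs) →
      c * (volume (Metric.closedBall w r)).toReal ≤ F v := by
    intro v w r hr c hc hbd
    have hint := F_integrable γ hγ0 hγ1 v
    have h1 : ∫ _ in Metric.closedBall w r, c ≤
        ∫ vs in Metric.closedBall w r, ‖v - vs‖ ^ γ * gauss vs :=
      setIntegral_mono_on (integrableOn_const measure_closedBall_lt_top.ne)
        hint.integrableOn measurableSet_closedBall hbd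
    rw [setIntegral_const, smul_eq_mul] at h1
    have h2 : ∫ vs in Metric.closedBall w r, ‖v - vs‖ ^ γ * gauss vs ≤ F v :=
      setIntegral_le_integral hint (Filter.Eventually.of_forall fun x =>
        mul_nonneg (Real.rpow_nonneg (norm_nonneg _) _) (gauss_pos x).le)
    calc c * (volume (Metric.closedBall w r)).toReal
        = (volume (Metric.closedBall w r)).toReal * c := by ring
      _ ≤ _ := h1.trans h2
  -- reduction of ν
  have hν' : ∀ v, ν v = lb * F v := by
    intro v
    rw [hν v]
    have hcongr : ∀ᵐ vs : E3, (∫ σ in Metric.sphere (0:E3) 1,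
        b ⟪‖v - vs‖⁻¹ • (v - vs), σ⟫ * ‖v - vs‖ ^ γ * gauss vs ∂μH[2])
        = lb * (‖v - vs‖ ^ γ * gauss vs) := by
      have hm : (volume : Measure E3) {v} = 0 := measure_singleton v
      filter_upwards [compl_mem_ae_iff.2 hm] with vs hvs
      simp only [Set.mem_compl_iff, Set.mem_singleton_iff] at hvs
      have hne : v - vs ≠ 0 := sub_ne_zero.2 (Ne.symm hvs)
      have hk : ‖(‖v - vs‖⁻¹ : ℝ) • (v - vs)‖ = 1 := norm_smul_inv_norm hne
      simp_rw [mul_assoc]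
      rw [integral_mul_const, hlb_int _ hk, mul_comm]
    rw [integral_congr_ae hcongr, integral_const_mul]
  -- constants
  set w : E3 := EuclideanSpace.single (0 : Fin 3) (7/2 : ℝ) with hwdef
  have hwnorm : ‖w‖ = 7/2 := by
    rw [hwdef, EuclideanSpace.norm_single]
    norm_num
  set cg : ℝ := c0 * Real.exp (-8) with hcgdef
  have hcg : 0 < cg := mul_pos c0_pos (Real.exp_pos _)
  have gauss_lower : ∀ x : E3, ‖x‖ ≤ 4 → cg ≤ gauss x := by
    intro x hx
    rw [gauss_eq x, hcgdef]
    refine mul_le_mul_of_nonneg_left ?_ c0_pos.le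
    refine Real.exp_le_exp.2 ?_
    nlinarith [norm_nonneg x]
  set m1 : ℝ := (volume (Metric.closedBall (0:E3) 1)).toReal with hm1def
  set m2 : ℝ := (volume (Metric.closedBall w (1/2))).toReal with hm2def
  have hm1 : 0 < m1 := ENNReal.toReal_pos
    (Metric.measure_closedBall_pos _ _ one_pos).ne' measure_closedBall_lt_top.ne
  have hm2 : 0 < m2 := ENNReal.toReal_pos
    (Metric.measure_closedBall_pos _ _ (by norm_num : (0:ℝ) < 1/2)).ne'
    measure_closedBall_lt_top.ne
  set I0 : ℝ := ∫ x : E3, gauss x with hI0def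
  set I2 : ℝ := ∫ x : E3, ‖x‖ * gauss x with hI2def
  have hI0 : 0 ≤ I0 := integral_nonneg fun x => (gauss_pos x).le
  have hI2 : 0 ≤ I2 := integral_nonneg fun x =>
    mul_nonneg (norm_nonneg _) (gauss_pos x).le
  have hminpos : 0 < min m1 m2 := lt_min hm1 hm2
  refine ⟨lb * (cg * min m1 m2 / 4), max (lb * (I0 + I2)) (lb * (cg * min m1 m2 / 4)),
    by positivity, le_max_right _ _, fun v => ⟨?_, ?_⟩⟩
  · -- lower bound
    rw [hν' v]
    have hvγnn : 0 ≤ ‖v‖ ^ γ := Real.rpow_nonneg (norm_nonneg _) _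
    rcases le_total ‖v‖ 2 with hv | hv
    · -- small velocities
      have hbd : ∀ vs ∈ Metric.closedBall w (1/2), cg ≤ ‖v - vs‖ ^ γ * gauss vs := by
        intro vs hvs
        rw [Metric.mem_closedBall, dist_eq_norm] at hvs
        have hwv : ‖w‖ - ‖vs‖ ≤ ‖vs - w‖ := by
          have h := norm_sub_norm_le w vs
          rwa [norm_sub_rev] at h
        have h3 : (3:ℝ) ≤ ‖vs‖ := by rw [hwnorm] at hwv; linarith
        have h4 : ‖vs‖ ≤ 4 := by
          have h := norm_add_le (vs - w) w
          rw [sub_add_cancel] at h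
          rw [hwnorm] at h; linarith
        have h1 : (1:ℝ) ≤ ‖v - vs‖ := by
          have h := norm_sub_norm_le vs v
          rw [norm_sub_rev] at h
          linarith
        have hγb : (1:ℝ) ≤ ‖v - vs‖ ^ γ := Real.one_le_rpow h1 hγ0
        have hg := gauss_lower vs h4
        calc cg = 1 * cg := (one_mul _).symm
          _ ≤ ‖v - vs‖ ^ γ * gauss vs := mul_le_mul hγb hg hcg.le (by linarith)
      have hkey := setlower v w (1/2) (by norm_num) cg hcg.le hbd
      rw [← hm2def] at hkey
      have hvγ : ‖v‖ ^ γ ≤ 3 := by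
        have := rpow_le_one_add ‖v‖ γ (norm_nonneg v) hγ0 hγ1; linarith
      have hmin : min m1 m2 ≤ m2 := min_le_right _ _
      have hA : lb * (cg * min m1 m2 / 4) * (1 + ‖v‖ ^ γ) ≤ lb * (cg * min m1 m2 / 4) * 4 :=
        mul_le_mul_of_nonneg_left (by linarith) (by positivity)
      have hC : cg * min m1 m2 ≤ cg * m2 := mul_le_mul_of_nonneg_left hmin hcg.le
      have hD : lb * (cg * m2) ≤ lb * F v := mul_le_mul_of_nonneg_left hkey hlb.le
      have hCl := mul_le_mul_of_nonneg_left hC hlb.le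
      linarith
    · -- large velocities
      have hbd : ∀ vs ∈ Metric.closedBall (0:E3) 1,
          (‖v‖/2) ^ γ * cg ≤ ‖v - vs‖ ^ γ * gauss vs := by
        intro vs hvs
        rw [Metric.mem_closedBall, dist_zero_right] at hvs
        have h1 : ‖v‖/2 ≤ ‖v - vs‖ := by
          have h := norm_sub_norm_le v vs
          linarith
        have hγb : (‖v‖/2) ^ γ ≤ ‖v - vs‖ ^ γ :=
          Real.rpow_le_rpow (by positivity) h1 hγ0
        have hg : cg ≤ gauss vs := gauss_lower vs (by linarith)
        exact mul_le_mul hγb hg hcg.le (Real.rpow_nonneg (norm_nonneg _) _)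
      have hkey := setlower v 0 1 one_pos ((‖v‖/2) ^ γ * cg)
        (mul_nonneg (Real.rpow_nonneg (by positivity) _) hcg.le) hbd
      rw [← hm1def] at hkey
      have h2γ : ‖v‖ ^ γ ≤ 2 * (‖v‖/2) ^ γ := by
        have h := Real.mul_rpow (by norm_num : (0:ℝ) ≤ 2)
          (by positivity : (0:ℝ) ≤ ‖v‖/2) (z := γ)
        have heq2 : (2:ℝ) * (‖v‖/2) = ‖v‖ := by ring
        rw [heq2] at h
        have h2 : (2:ℝ) ^ γ ≤ 2 := by
          have := Real.rpow_le_rpow_of_exponent_le one_le_two hγ1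
          rwa [Real.rpow_one] at this
        calc ‖v‖ ^ γ = 2 ^ γ * (‖v‖/2) ^ γ := h
          _ ≤ 2 * (‖v‖/2) ^ γ :=
            mul_le_mul_of_nonneg_right h2 (Real.rpow_nonneg (by positivity) _)
      have h1γ : 1 ≤ ‖v‖ ^ γ := Real.one_le_rpow (by linarith) hγ0
      have hs : 1 + ‖v‖ ^ γ ≤ 4 * (‖v‖/2) ^ γ := by linarith
      have hmin : min m1 m2 ≤ m1 := min_le_left _ _
      have hhalfnn : 0 ≤ (‖v‖/2) ^ γ := Real.rpow_nonneg (by positivity) _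
      have hprod : min m1 m2 * ((1 + ‖v‖ ^ γ)/4) ≤ m1 * (‖v‖/2) ^ γ :=
        mul_le_mul hmin (by linarith) (by linarith) hm1.le
      have e1 := mul_le_mul_of_nonneg_left hprod (mul_nonneg hlb.le hcg.le)
      have e2 := mul_le_mul_of_nonneg_left hkey hlb.le
      linarith
  · -- upper bound
    rw [hν' v]
    have hvγnn : 0 ≤ ‖v‖ ^ γ := Real.rpow_nonneg (norm_nonneg _) _
    have hbound : F v ≤ (‖v‖ ^ γ + 1) * I0 + I2 := by
      have hptwise : ∀ vs : E3, ‖v - vs‖ ^ γ * gauss vs ≤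
          (‖v‖ ^ γ + 1) * gauss vs + ‖vs‖ * gauss vs := by
        intro vs
        have ht : 0 ≤ ‖vs‖ := norm_nonneg _
        have ha : ‖v - vs‖ ^ γ ≤ (‖v‖ + ‖vs‖) ^ γ :=
          Real.rpow_le_rpow (norm_nonneg _) (norm_sub_le _ _) hγ0
        have hb := rpow_add_le ‖v‖ ‖vs‖ γ (norm_nonneg _) ht hγ0 hγ1
        have hc := rpow_le_one_add ‖vs‖ γ ht hγ0 hγ1
        have h1 : ‖v - vs‖ ^ γ ≤ ‖v‖ ^ γ + 1 + ‖vs‖ := by linarith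
        linarith [mul_le_mul_of_nonneg_right h1 (gauss_pos vs).le]
      have hint2 : Integrable (fun vs : E3 => (‖v‖ ^ γ + 1) * gauss vs + ‖vs‖ * gauss vs) :=
        (gauss_integrable.const_mul _).add norm_gauss_integrable
      have hmono := integral_mono (F_integrable γ hγ0 hγ1 v) hint2 hptwise
      rwa [integral_add (gauss_integrable.const_mul _) norm_gauss_integrable,
        integral_const_mul] at hmono
    have h1 : lb * F v ≤ lb * ((‖v‖ ^ γ + 1) * I0 + I2) :=
      mul_le_mul_of_nonneg_left hbound hlb.le
    have h2 : lb * ((‖v‖ ^ γ + 1) * I0 + I2) ≤ (lb * (I0 + I2)) * (1 + ‖v‖ ^ γ) := by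
      linarith [mul_nonneg (mul_nonneg hlb.le hvγnn) hI2]
    have h3 : (lb * (I0 + I2)) * (1 + ‖v‖ ^ γ) ≤
        max (lb * (I0 + I2)) (lb * (cg * min m1 m2 / 4)) * (1 + ‖v‖ ^ γ) :=
      mul_le_mul_of_nonneg_right (le_max_left _ _) (by linarith)
    linarith
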